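/- For n ≥ 3, the signless Laplacian spectral radius of Q_n^1 satisfies 2n − 2 < q(Q_n^1) < 2n − 1. -/

import Mathlib

open SimpleGraph

attribute [local instance] Classical.propDecidable

/-- The (adjacency) spectral radius of a graph, as the largest adjacency eigenvalue. -/
noncomputable def specRad {V : Type*} [Fintype V] [DecidableEq V] (G : SimpleGraph V) : ℝ :=
  sSup (spectrum ℝ (G.adjMatrix ℝ))

/-- The signless Laplacian matrix `Q = D + A` of a graph. -/
noncomputable def signlessLaplacian {V : Type*} [Fintype V] [DecidableEq V]
    (G : SimpleGraph V) : Matrix V V ℝ :=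
  Matrix.diagonal (fun v => (G.degree v : ℝ)) + G.adjMatrix ℝ

/-- The signless Laplacian spectral radius of a graph. -/
noncomputable def qSpec {V : Type*} [Fintype V] [DecidableEq V] (G : SimpleGraph V) : ℝ :=
  sSup (spectrum ℝ (signlessLaplacian G))

/-- A graph is traceable if it has a Hamilton path. -/
def SimpleGraph.IsTraceable {V : Type*} (G : SimpleGraph V) : Prop :=
  ∃ (u v : V) (p : G.Walk u v), p.IsHamiltonian

/-- A graph on `Fin m ⊕ Fin n` is bipartite with bipartition `{Fin m, Fin n}`:
all edges go between the two parts. -/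
def CrossOnly {m n : ℕ} (G : SimpleGraph (Fin m ⊕ Fin n)) : Prop :=
  (∀ x y : Fin m, ¬ G.Adj (Sum.inl x) (Sum.inl y)) ∧
  (∀ x y : Fin n, ¬ G.Adj (Sum.inr x) (Sum.inr y))

/-- The graph `Q_n^k = K_{k,n-k-1} ⊔ Φ_{n-k,k+1}`: a vertex `inl x` with `x < k` is joined to
all of the right side, a vertex `inr y` with `y < n-k-1` is joined to all of the left side,
and there are no other edges. -/
def Qgraph (n k : ℕ) : SimpleGraph (Fin n ⊕ Fin n) :=
  SimpleGraph.fromRel (fun a b =>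
    match a, b with
    | Sum.inl x, Sum.inr y => x.val < k ∨ y.val < n - k - 1
    | _, _ => False)

/-- The graph `R_n^k = K_{k,k} ∪ K_{n-k,n-k}` (disjoint union). -/
def Rgraph (n k : ℕ) : SimpleGraph (Fin n ⊕ Fin n) :=
  SimpleGraph.fromRel (fun a b =>
    match a, b with
    | Sum.inl x, Sum.inr y => (x.val < k ∧ y.val < k) ∨ (k ≤ x.val ∧ k ≤ y.val)
    | _, _ => False)

/-- The graph `S_n^k = K_{k,n-k-1} ⊔ Φ_{n-k,k}` on parts of sizes `n` and `n-1`. -/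
def Sgraph (n k : ℕ) : SimpleGraph (Fin n ⊕ Fin (n - 1)) :=
  SimpleGraph.fromRel (fun a b =>
    match a, b with
    | Sum.inl x, Sum.inr y => x.val < k ∨ y.val < n - k - 1
    | _, _ => False)

/-- The quasi-complement of a bipartite graph: `inl x` and `inr y` are adjacent iff they are
nonadjacent in `G`; no edges inside the parts. -/
def quasiComplement {m n : ℕ} (G : SimpleGraph (Fin m ⊕ Fin n)) : SimpleGraph (Fin m ⊕ Fin n) :=
  SimpleGraph.fromRel (fun a b =>
    match a, b with
    | Sum.inl x, Sum.inr y => ¬ G.Adj (Sum.inl x) (Sum.inr y)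
    | _, _ => False)

/-- `G` is isomorphic to a subgraph of `H`. -/
def IsoSubgraph {V W : Type*} (G : SimpleGraph V) (H : SimpleGraph W) : Prop :=
  ∃ H' : SimpleGraph W, H' ≤ H ∧ Nonempty (G ≃g H')


namespace QSpecAux

lemma Zlem (N a p q s : ℝ) (hn : 3 ≤ N) :
    0 ≤ 2*(N-1)*(N-2)*(3*N-4)*a^2 + 2*(N-2)*(3*N+2)*p^2 + 2*(N-1)*(3*N-4)*q^2
      + (N-1)*(N-2)*(6*N-7)*s^2 - 12*(N-1)*(N-2)*(a*q + a*s + p*q) := by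
  have h3 : (0:ℝ) ≤ N - 3 := by linarith
  have hU : (0:ℝ) < 18*N^2 - 45*N + 10 := by nlinarith
  have hM : (0:ℝ) < (3*N+2)*((6*N-7)*(18*N^2-45*N+10)) := by nlinarith
  have hCq : (0:ℝ) ≤ 2592*N^5 - 17712*N^4 + 45360*N^3 - 55200*N^2 + 32128*N - 7168 := by
    nlinarith [mul_nonneg (mul_nonneg (mul_nonneg (mul_nonneg h3 h3) h3) h3) h3,
      mul_nonneg (mul_nonneg (mul_nonneg h3 h3) h3) h3,
      mul_nonneg (mul_nonneg h3 h3) h3, mul_nonneg h3 h3]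
  have hMZ : 0 ≤ ((3*N+2)*((6*N-7)*(18*N^2-45*N+10)))
      * (2*(N-1)*(N-2)*(3*N-4)*a^2 + 2*(N-2)*(3*N+2)*p^2 + 2*(N-1)*(3*N-4)*q^2
      + (N-1)*(N-2)*(6*N-7)*s^2 - 12*(N-1)*(N-2)*(a*q + a*s + p*q)) := by
    nlinarith [mul_nonneg (by nlinarith : (0:ℝ) ≤ (3*N+2)*(18*N^2-45*N+10)*((N-1)*(N-2)))
        (sq_nonneg ((6*N-7)*s - 6*a)),
      mul_nonneg (by nlinarith : (0:ℝ) ≤ 2*(N-1)*(N-2)*(3*N+2))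
        (sq_nonneg ((18*N^2-45*N+10)*a - 3*(6*N-7)*q)),
      mul_nonneg (by nlinarith : (0:ℝ) ≤ 2*(N-2)*(18*N^2-45*N+10)*(6*N-7))
        (sq_nonneg ((3*N+2)*p - 3*(N-1)*q)),
      mul_nonneg hCq (sq_nonneg q)]
  by_contra h
  push_neg at h
  have := mul_neg_of_pos_of_neg hM h
  linarith

lemma keyIneq (N a p q s B C D : ℝ) (hn : 3 ≤ N)
    (hB : p^2 ≤ (N-1)*B) (hC : q^2 ≤ (N-2)*C) (hD : s^2 ≤ 2*D)
    (hpos : 0 < a^2 + B + C + D) :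
    2*a*q + 2*a*s + 2*p*q < (N-1)*a^2 + (N+1)*B + (N-1)*C + (2*N-2)*D := by
  have hZ := Zlem N a p q s hn
  have hK : (0:ℝ) < (N-1)*(N-2) := by nlinarith
  nlinarith [mul_nonneg (by nlinarith : (0:ℝ) ≤ 2*(N-2)*(3*N+2)) (by linarith : (0:ℝ) ≤ (N-1)*B - p^2),
    mul_nonneg (by nlinarith : (0:ℝ) ≤ 2*(N-1)*(3*N-4)) (by linarith : (0:ℝ) ≤ (N-2)*C - q^2),
    mul_nonneg (by nlinarith : (0:ℝ) ≤ (N-1)*(N-2)*(6*N-7)) (by linarith : (0:ℝ) ≤ 2*D - s^2),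
    mul_pos hK hpos, hZ]

open Matrix Finset
variable {V : Type*} [Fintype V] [DecidableEq V]

lemma sl_isHermitian (G : SimpleGraph V) : (signlessLaplacian G).IsHermitian := by
  unfold signlessLaplacian
  apply Matrix.IsHermitian.add
  · exact Matrix.isHermitian_diagonal _
  · rw [Matrix.IsHermitian, Matrix.conjTranspose_eq_transpose_of_trivial]
    exact (SimpleGraph.isSymm_adjMatrix G)

lemma eig_lt {M : Matrix V V ℝ} (hM : M.IsHermitian) {c : ℝ}
    (h : ∀ x : V → ℝ, x ≠ 0 → x ⬝ᵥ (M *ᵥ x) < c * (x ⬝ᵥ x)) (i : V) :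
    hM.eigenvalues i < c := by
  set v : V → ℝ := ⇑(hM.eigenvectorBasis i) with hv
  have hMv : M *ᵥ v = hM.eigenvalues i • v := hM.mulVec_eigenvectorBasis i
  have hvne : v ≠ 0 := by
    intro h0
    have hnorm := hM.eigenvectorBasis.orthonormal.1 i
    have : hM.eigenvectorBasis i = 0 := by
      ext j; exact congrFun h0 j
    rw [this] at hnorm
    simp at hnorm
  have hpos : 0 < v ⬝ᵥ v := by
    rcases (Finset.sum_nonneg fun j _ => mul_self_nonneg (v j) : 0 ≤ v ⬝ᵥ v).lt_or_eq with h' | h'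
    · exact h'
    · exact absurd ((dotProduct_self_eq_zero).mp h'.symm) hvne
  have hlt := h v hvne
  rw [hMv, dotProduct_smul, smul_eq_mul] at hlt
  exact (mul_lt_mul_iff_of_pos_right hpos).mp hlt

lemma rayleigh_le {M : Matrix V V ℝ} (hM : M.IsHermitian) {c : ℝ}
    (h : ∀ i, hM.eigenvalues i ≤ c) (x : V → ℝ) :
    x ⬝ᵥ (M *ᵥ x) ≤ c * (x ⬝ᵥ x) := by
  set U : Matrix V V ℝ := (hM.eigenvectorUnitary : Matrix V V ℝ) with hUdef
  have hU : U * star U = 1 := (Matrix.mem_unitaryGroup_iff).mp hM.eigenvectorUnitary.2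
  have hstar : star U = Uᵀ := by
    rw [Matrix.star_eq_conjTranspose, Matrix.conjTranspose_eq_transpose_of_trivial]
  set y : V → ℝ := Uᵀ *ᵥ x with hy
  have hxy : ∀ w : V → ℝ, x ⬝ᵥ (U *ᵥ w) = y ⬝ᵥ w := by
    intro w
    rw [Matrix.dotProduct_mulVec, hy]
    congr 1
    rw [← Matrix.vecMul_transpose, Matrix.transpose_transpose]
  have hspec : M = U * Matrix.diagonal hM.eigenvalues * (star U) := by
    have h2 := hM.spectral_theorem
    convert h2 using 2
    simp [hUdef]
  have hyy : y ⬝ᵥ y = x ⬝ᵥ x := by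
    have := hxy (Uᵀ *ᵥ x)
    rw [← hy] at this
    rw [← this, Matrix.mulVec_mulVec, ← hstar, hU, Matrix.one_mulVec]
  have hform : x ⬝ᵥ (M *ᵥ x) = ∑ i, hM.eigenvalues i * (y i * y i) := by
    conv_lhs => rw [hspec]
    rw [hstar, ← Matrix.mulVec_mulVec, ← Matrix.mulVec_mulVec, hxy, ← hy]
    unfold dotProduct
    refine Finset.sum_congr rfl fun i _ => ?_
    rw [Matrix.mulVec_diagonal]
    ring
  rw [hform, ← hyy]
  calc ∑ i, hM.eigenvalues i * (y i * y i) ≤ ∑ i, c * (y i * y i) :=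
        Finset.sum_le_sum fun i _ => mul_le_mul_of_nonneg_right (h i) (mul_self_nonneg _)
    _ = c * (y ⬝ᵥ y) := by rw [dotProduct, Finset.mul_sum]

lemma qSpec_bounds [Nonempty V] (G : SimpleGraph V) {c₁ c₂ : ℝ}
    (hup : ∀ x : V → ℝ, x ≠ 0 → x ⬝ᵥ (signlessLaplacian G *ᵥ x) < c₂ * (x ⬝ᵥ x))
    (hlow : ∃ x : V → ℝ, c₁ * (x ⬝ᵥ x) < x ⬝ᵥ (signlessLaplacian G *ᵥ x)) :
    c₁ < qSpec G ∧ qSpec G < c₂ := by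
  have hM := sl_isHermitian G
  have hspec : spectrum ℝ (signlessLaplacian G) = Set.range hM.eigenvalues :=
    hM.spectrum_real_eq_range_eigenvalues
  have hfin : (spectrum ℝ (signlessLaplacian G)).Finite := by
    rw [hspec]; exact Set.finite_range _
  have hne : (spectrum ℝ (signlessLaplacian G)).Nonempty := by
    rw [hspec]; exact Set.range_nonempty _
  constructor
  · obtain ⟨x, hx⟩ := hlow
    by_contra hc
    push_neg at hc
    have hall : ∀ i, hM.eigenvalues i ≤ c₁ := by
      intro i
      calc hM.eigenvalues i ≤ sSup (spectrum ℝ (signlessLaplacian G)) :=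
              le_csSup hfin.bddAbove (by rw [hspec]; exact Set.mem_range_self i)
        _ = qSpec G := rfl
        _ ≤ c₁ := hc
    exact absurd (rayleigh_le hM hall x) (not_le.mpr hx)
  · have hmem : sSup (spectrum ℝ (signlessLaplacian G)) ∈ spectrum ℝ (signlessLaplacian G) :=
      Set.Nonempty.csSup_mem hne hfin
    rw [hspec] at hmem
    obtain ⟨i, hi⟩ := hmem
    have hq : qSpec G = sSup (spectrum ℝ (signlessLaplacian G)) := rfl
    rw [hq, hspec, ← hi]
    exact eig_lt hM hup i



variable {V : Type*} [Fintype V] [DecidableEq V]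

lemma degree_cast (G : SimpleGraph V) (v : V) :
    ((G.degree v : ℝ)) = ∑ u, (G.adjMatrix ℝ) v u := by
  have h := SimpleGraph.adjMatrix_mulVec_const_apply (G := G) (α := ℝ) (a := (1:ℝ)) (v := v)
  simp only [Matrix.mulVec, dotProduct, Function.const_apply, mul_one] at h
  exact h.symm

lemma form_general (G : SimpleGraph V) (x : V → ℝ) :
    x ⬝ᵥ (signlessLaplacian G *ᵥ x) =
      ∑ v, ∑ u, (G.adjMatrix ℝ) v u * (x v ^ 2 + x v * x u) := by
  unfold signlessLaplacian
  rw [Matrix.add_mulVec, dotProduct_add]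
  have h1 : x ⬝ᵥ (Matrix.diagonal (fun v => (G.degree v : ℝ)) *ᵥ x)
      = ∑ v, ∑ u, (G.adjMatrix ℝ) v u * x v ^ 2 := by
    unfold dotProduct
    refine Finset.sum_congr rfl fun v _ => ?_
    rw [Matrix.mulVec_diagonal, degree_cast, Finset.sum_mul, Finset.mul_sum]
    exact Finset.sum_congr rfl fun u _ => by ring
  have h2 : x ⬝ᵥ (G.adjMatrix ℝ *ᵥ x) = ∑ v, ∑ u, (G.adjMatrix ℝ) v u * (x v * x u) := by
    unfold dotProduct Matrix.mulVec dotProduct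
    refine Finset.sum_congr rfl fun v _ => ?_
    rw [Finset.mul_sum]
    exact Finset.sum_congr rfl fun u _ => by ring
  rw [h1, h2, ← Finset.sum_add_distrib]
  refine Finset.sum_congr rfl fun v _ => ?_
  rw [← Finset.sum_add_distrib]
  exact Finset.sum_congr rfl fun u _ => by ring

section Qn
variable {n : ℕ}

lemma adj_inl_inr (i j : Fin n) :
    (Qgraph n 1).Adj (Sum.inl i) (Sum.inr j) ↔ ((i : ℕ) < 1 ∨ (j : ℕ) < n - 1 - 1) := by
  simp [Qgraph, SimpleGraph.fromRel_adj]

lemma adj_inl_inl (i j : Fin n) : ¬ (Qgraph n 1).Adj (Sum.inl i) (Sum.inl j) := by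
  simp [Qgraph, SimpleGraph.fromRel_adj]

lemma adj_inr_inr (i j : Fin n) : ¬ (Qgraph n 1).Adj (Sum.inr i) (Sum.inr j) := by
  simp [Qgraph, SimpleGraph.fromRel_adj]

lemma form_Q (x : Fin n ⊕ Fin n → ℝ) :
    x ⬝ᵥ (signlessLaplacian (Qgraph n 1) *ᵥ x) =
      ∑ i : Fin n, ∑ j : Fin n,
        (if (i : ℕ) < 1 ∨ (j : ℕ) < n - 1 - 1
          then (x (Sum.inl i) + x (Sum.inr j))^2 else 0) := by
  rw [form_general]
  rw [Fintype.sum_sum_type]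
  have hll : ∀ i j : Fin n, (Qgraph n 1).adjMatrix ℝ (Sum.inl i) (Sum.inl j) = 0 := by
    intro i j; simp [SimpleGraph.adjMatrix_apply, adj_inl_inl]
  have hrr : ∀ i j : Fin n, (Qgraph n 1).adjMatrix ℝ (Sum.inr i) (Sum.inr j) = 0 := by
    intro i j; simp [SimpleGraph.adjMatrix_apply, adj_inr_inr]
  have hlr : ∀ i j : Fin n, (Qgraph n 1).adjMatrix ℝ (Sum.inl i) (Sum.inr j)
      = if (i : ℕ) < 1 ∨ (j : ℕ) < n - 1 - 1 then (1:ℝ) else 0 := by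
    intro i j; simp [SimpleGraph.adjMatrix_apply, adj_inl_inr]
  have hrl : ∀ i j : Fin n, (Qgraph n 1).adjMatrix ℝ (Sum.inr j) (Sum.inl i)
      = if (i : ℕ) < 1 ∨ (j : ℕ) < n - 1 - 1 then (1:ℝ) else 0 := by
    intro i j
    rw [show (Qgraph n 1).adjMatrix ℝ (Sum.inr j) (Sum.inl i)
        = (Qgraph n 1).adjMatrix ℝ (Sum.inl i) (Sum.inr j) from by
      simp [SimpleGraph.adjMatrix_apply, SimpleGraph.adj_comm]]
    exact hlr i j
  have step1 : ∀ i : Fin n,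
      (∑ u : Fin n ⊕ Fin n, (Qgraph n 1).adjMatrix ℝ (Sum.inl i) u
        * (x (Sum.inl i) ^ 2 + x (Sum.inl i) * x u))
      = ∑ j : Fin n, (if (i : ℕ) < 1 ∨ (j : ℕ) < n - 1 - 1
          then x (Sum.inl i) ^ 2 + x (Sum.inl i) * x (Sum.inr j) else 0) := by
    intro i
    rw [Fintype.sum_sum_type]
    simp only [hll, hlr, zero_mul, Finset.sum_const_zero, zero_add, ite_mul, one_mul]
  have step2 : ∀ j : Fin n,
      (∑ u : Fin n ⊕ Fin n, (Qgraph n 1).adjMatrix ℝ (Sum.inr j) u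
        * (x (Sum.inr j) ^ 2 + x (Sum.inr j) * x u))
      = ∑ i : Fin n, (if (i : ℕ) < 1 ∨ (j : ℕ) < n - 1 - 1
          then x (Sum.inr j) ^ 2 + x (Sum.inr j) * x (Sum.inl i) else 0) := by
    intro j
    rw [Fintype.sum_sum_type]
    simp only [hrr, hrl, zero_mul, Finset.sum_const_zero, add_zero, ite_mul, one_mul]
  rw [Finset.sum_congr rfl fun i _ => step1 i, Finset.sum_congr rfl fun j _ => step2 j]
  rw [Finset.sum_comm (f := fun (j i : Fin n) => (if (i : ℕ) < 1 ∨ (j : ℕ) < n - 1 - 1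
          then x (Sum.inr j) ^ 2 + x (Sum.inr j) * x (Sum.inl i) else 0))]
  rw [← Finset.sum_add_distrib]
  refine Finset.sum_congr rfl fun i _ => ?_
  rw [← Finset.sum_add_distrib]
  refine Finset.sum_congr rfl fun j _ => ?_
  split_ifs with h
  · ring
  · ring
end Qn

section Split
variable {n : ℕ}

lemma card_filter_val_lt (m : ℕ) (h : m ≤ n) :
    (Finset.univ.filter (fun j : Fin n => (j : ℕ) < m)).card = m := by
  have : (Finset.univ.filter (fun j : Fin n => (j : ℕ) < m))
      = (Finset.range m).attachFin (fun a ha => lt_of_lt_of_le (Finset.mem_range.mp ha) h) := by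
    ext a
    simp [Finset.mem_attachFin, Finset.mem_range]
  rw [this, Finset.card_attachFin, Finset.card_range]

lemma expand_one (t : Finset (Fin n)) (a : ℝ) (g : Fin n → ℝ) :
    ∑ j ∈ t, (a + g j)^2
      = (t.card : ℝ) * a^2 + 2*a*(∑ j ∈ t, g j) + ∑ j ∈ t, (g j)^2 := by
  rw [Finset.sum_congr rfl (fun j _ => by ring :
      ∀ j ∈ t, (a + g j)^2 = a^2 + (2*a) * g j + (g j)^2)]
  rw [Finset.sum_add_distrib, Finset.sum_add_distrib, Finset.sum_const, ← Finset.mul_sum,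
    nsmul_eq_mul]
  try ring

lemma expand_pair (s t : Finset (Fin n)) (f g : Fin n → ℝ) :
    ∑ i ∈ s, ∑ j ∈ t, (f i + g j)^2
      = (t.card : ℝ) * ∑ i ∈ s, (f i)^2 + (s.card : ℝ) * ∑ j ∈ t, (g j)^2
        + 2 * (∑ i ∈ s, f i) * (∑ j ∈ t, g j) := by
  have ha : ∑ i ∈ s, ∑ j ∈ t, (f i)^2 = (t.card : ℝ) * ∑ i ∈ s, (f i)^2 := by
    simp only [Finset.sum_const, nsmul_eq_mul, ← Finset.mul_sum]
  have hc : ∑ i ∈ s, ∑ j ∈ t, (g j)^2 = (s.card : ℝ) * ∑ j ∈ t, (g j)^2 := by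
    rw [Finset.sum_const, nsmul_eq_mul]
  have hb : ∑ i ∈ s, ∑ j ∈ t, (f i * g j) = (∑ i ∈ s, f i) * (∑ j ∈ t, g j) :=
    (Finset.sum_mul_sum s t f g).symm
  calc ∑ i ∈ s, ∑ j ∈ t, (f i + g j)^2
      = ∑ i ∈ s, ∑ j ∈ t, ((f i)^2 + (2*(f i * g j) + (g j)^2)) :=
        Finset.sum_congr rfl fun i _ => Finset.sum_congr rfl fun j _ => by ring
    _ = (∑ i ∈ s, ∑ j ∈ t, (f i)^2) + ((∑ i ∈ s, ∑ j ∈ t, 2*(f i * g j))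
          + ∑ i ∈ s, ∑ j ∈ t, (g j)^2) := by
        simp only [Finset.sum_add_distrib]
    _ = _ := by
        have h2 : ∑ i ∈ s, ∑ j ∈ t, 2*(f i * g j)
            = 2 * ∑ i ∈ s, ∑ j ∈ t, (f i * g j) := by
          simp only [← Finset.mul_sum]
        rw [h2, hb, ha, hc]
        ring
end Split

section Value
variable {n : ℕ}

lemma form_value (hn : 3 ≤ n) (x : Fin n ⊕ Fin n → ℝ) :
    haveI : NeZero n := ⟨by omega⟩
    x ⬝ᵥ (signlessLaplacian (Qgraph n 1) *ᵥ x) =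
      (n:ℝ) * (x (Sum.inl 0))^2
      + 2 * (x (Sum.inl 0)) * ((∑ j ∈ Finset.univ.filter (fun j : Fin n => (j:ℕ) < n-1-1),
            x (Sum.inr j)) + ∑ j ∈ Finset.univ.filter (fun j : Fin n => ¬ (j:ℕ) < n-1-1),
            x (Sum.inr j))
      + ((∑ j ∈ Finset.univ.filter (fun j : Fin n => (j:ℕ) < n-1-1), (x (Sum.inr j))^2)
          + ∑ j ∈ Finset.univ.filter (fun j : Fin n => ¬ (j:ℕ) < n-1-1), (x (Sum.inr j))^2)
      + ((n:ℝ)-2) * (∑ i ∈ Finset.univ.erase (0 : Fin n), (x (Sum.inl i))^2)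
      + ((n:ℝ)-1) * (∑ j ∈ Finset.univ.filter (fun j : Fin n => (j:ℕ) < n-1-1),
            (x (Sum.inr j))^2)
      + 2 * (∑ i ∈ Finset.univ.erase (0 : Fin n), x (Sum.inl i))
          * (∑ j ∈ Finset.univ.filter (fun j : Fin n => (j:ℕ) < n-1-1), x (Sum.inr j)) := by
  haveI : NeZero n := ⟨by omega⟩
  rw [form_Q]
  have hsplit : ∑ i : Fin n, ∑ j : Fin n,
      (if (i : ℕ) < 1 ∨ (j : ℕ) < n - 1 - 1
        then (x (Sum.inl i) + x (Sum.inr j))^2 else 0)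
      = (∑ i ∈ Finset.univ.erase (0 : Fin n), ∑ j ∈ Finset.univ.filter
            (fun j : Fin n => (j:ℕ) < n-1-1), (x (Sum.inl i) + x (Sum.inr j))^2)
        + ∑ j : Fin n, (x (Sum.inl 0) + x (Sum.inr j))^2 := by
    rw [← Finset.sum_erase_add Finset.univ _ (Finset.mem_univ (0 : Fin n))]
    congr 1
    · refine Finset.sum_congr rfl fun i hi => ?_
      have hine : i ≠ 0 := (Finset.mem_erase.mp hi).1
      have hnot : ¬ ((i:ℕ) < 1) := by
        intro hlt
        apply hine
        apply Fin.ext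
        simp only [Fin.val_zero]
        omega
      rw [Finset.sum_filter]
      refine Finset.sum_congr rfl fun j _ => ?_
      simp [hnot]
  rw [hsplit]
  have hcard1 : ((Finset.univ.erase (0 : Fin n)).card : ℝ) = (n:ℝ) - 1 := by
    rw [Finset.card_erase_of_mem (Finset.mem_univ _), Finset.card_univ, Fintype.card_fin]
    have : (1:ℕ) ≤ n := by omega
    push_cast [Nat.cast_sub this]
    ring
  have hcard2 : ((Finset.univ.filter (fun j : Fin n => (j:ℕ) < n-1-1)).card : ℝ)
      = (n:ℝ) - 2 := by
    rw [card_filter_val_lt (n-1-1) (by omega)]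
    have h2 : (2:ℕ) ≤ n := by omega
    have : n - 1 - 1 = n - 2 := by omega
    rw [this, Nat.cast_sub h2]
    norm_num
  rw [expand_pair, expand_one, hcard1, hcard2, Finset.card_univ, Fintype.card_fin]
  rw [← Finset.sum_filter_add_sum_filter_not Finset.univ (fun j : Fin n => (j:ℕ) < n-1-1)
      (fun j => x (Sum.inr j)),
    ← Finset.sum_filter_add_sum_filter_not Finset.univ (fun j : Fin n => (j:ℕ) < n-1-1)
      (fun j => (x (Sum.inr j))^2)]
  ring

lemma dot_value (hn : 3 ≤ n) (x : Fin n ⊕ Fin n → ℝ) :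
    haveI : NeZero n := ⟨by omega⟩
    x ⬝ᵥ x = (x (Sum.inl 0))^2
      + (∑ i ∈ Finset.univ.erase (0 : Fin n), (x (Sum.inl i))^2)
      + (∑ j ∈ Finset.univ.filter (fun j : Fin n => (j:ℕ) < n-1-1), (x (Sum.inr j))^2)
      + ∑ j ∈ Finset.univ.filter (fun j : Fin n => ¬ (j:ℕ) < n-1-1), (x (Sum.inr j))^2 := by
  haveI : NeZero n := ⟨by omega⟩
  have : x ⬝ᵥ x = ∑ v, (x v)^2 := by
    unfold dotProduct
    exact Finset.sum_congr rfl fun v _ => by ring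
  rw [this, Fintype.sum_sum_type]
  rw [← Finset.sum_erase_add Finset.univ _ (Finset.mem_univ (0 : Fin n))]
  rw [← Finset.sum_filter_add_sum_filter_not Finset.univ (fun j : Fin n => (j:ℕ) < n-1-1)
      (fun j => (x (Sum.inr j))^2)]
  ring
end Value

section Bounds
variable {n : ℕ}

lemma cardE (hn : 3 ≤ n) :
    haveI : NeZero n := ⟨by omega⟩
    (((Finset.univ.erase (0 : Fin n)).card : ℝ)) = (n:ℝ) - 1 := by
  haveI : NeZero n := ⟨by omega⟩
  rw [Finset.card_erase_of_mem (Finset.mem_univ _), Finset.card_univ, Fintype.card_fin]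
  have : (1:ℕ) ≤ n := by omega
  push_cast [Nat.cast_sub this]
  ring

lemma cardC (hn : 3 ≤ n) :
    (((Finset.univ.filter (fun j : Fin n => (j:ℕ) < n-1-1)).card : ℝ)) = (n:ℝ) - 2 := by
  rw [card_filter_val_lt (n-1-1) (by omega)]
  have h2 : (2:ℕ) ≤ n := by omega
  have : n - 1 - 1 = n - 2 := by omega
  rw [this, Nat.cast_sub h2]
  norm_num

lemma cardD (hn : 3 ≤ n) :
    (((Finset.univ.filter (fun j : Fin n => ¬ (j:ℕ) < n-1-1)).card : ℝ)) = 2 := by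
  have h := Finset.card_filter_add_card_filter_not
    (s := (Finset.univ : Finset (Fin n))) (p := fun j : Fin n => (j:ℕ) < n-1-1)
  rw [Finset.card_univ, Fintype.card_fin, card_filter_val_lt (n-1-1) (by omega)] at h
  have : (Finset.univ.filter (fun j : Fin n => ¬ (j:ℕ) < n-1-1)).card = 2 := by omega
  rw [this]
  norm_num

lemma form_upper (hn : 3 ≤ n) (x : Fin n ⊕ Fin n → ℝ) (hx : x ≠ 0) :
    x ⬝ᵥ (signlessLaplacian (Qgraph n 1) *ᵥ x) < (2*(n:ℝ)-1) * (x ⬝ᵥ x) := by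
  haveI : NeZero n := ⟨by omega⟩
  have hN : (3:ℝ) ≤ (n:ℝ) := by exact_mod_cast hn
  rw [form_value hn x, dot_value hn x]
  set a := x (Sum.inl 0) with ha
  set p := ∑ i ∈ Finset.univ.erase (0 : Fin n), x (Sum.inl i) with hp
  set B := ∑ i ∈ Finset.univ.erase (0 : Fin n), (x (Sum.inl i))^2 with hB
  set q := ∑ j ∈ Finset.univ.filter (fun j : Fin n => (j:ℕ) < n-1-1), x (Sum.inr j) with hq
  set C := ∑ j ∈ Finset.univ.filter (fun j : Fin n => (j:ℕ) < n-1-1), (x (Sum.inr j))^2 with hC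
  set s := ∑ j ∈ Finset.univ.filter (fun j : Fin n => ¬ (j:ℕ) < n-1-1), x (Sum.inr j) with hs
  set D := ∑ j ∈ Finset.univ.filter (fun j : Fin n => ¬ (j:ℕ) < n-1-1), (x (Sum.inr j))^2
    with hD
  have hBcs : p^2 ≤ ((n:ℝ)-1) * B := by
    have h := sq_sum_le_card_mul_sum_sq (s := Finset.univ.erase (0 : Fin n))
      (f := fun i => x (Sum.inl i))
    rw [cardE hn] at h
    exact_mod_cast h
  have hCcs : q^2 ≤ ((n:ℝ)-2) * C := by
    have h := sq_sum_le_card_mul_sum_sq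
      (s := Finset.univ.filter (fun j : Fin n => (j:ℕ) < n-1-1))
      (f := fun j => x (Sum.inr j))
    rw [cardC hn] at h
    exact_mod_cast h
  have hDcs : s^2 ≤ 2 * D := by
    have h := sq_sum_le_card_mul_sum_sq
      (s := Finset.univ.filter (fun j : Fin n => ¬ (j:ℕ) < n-1-1))
      (f := fun j => x (Sum.inr j))
    rw [cardD hn] at h
    exact_mod_cast h
  have hpos : 0 < a^2 + B + C + D := by
    have hdot : x ⬝ᵥ x = a^2 + B + C + D := by
      rw [dot_value hn x]
      try ring
    have hge : 0 ≤ x ⬝ᵥ x := Finset.sum_nonneg fun v _ => mul_self_nonneg (x v)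
    rcases hge.lt_or_eq with h' | h'
    · rw [← hdot]; exact h'
    · exact absurd ((dotProduct_self_eq_zero).mp h'.symm) hx
  have hkey := keyIneq (n:ℝ) a p q s B C D hN hBcs hCcs hDcs hpos
  nlinarith [hkey]

lemma form_lower (hn : 3 ≤ n) :
    ∃ x : Fin n ⊕ Fin n → ℝ,
      (2*(n:ℝ)-2) * (x ⬝ᵥ x) < x ⬝ᵥ (signlessLaplacian (Qgraph n 1) *ᵥ x) := by
  haveI : NeZero n := ⟨by omega⟩
  have hN : (3:ℝ) ≤ (n:ℝ) := by exact_mod_cast hn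
  refine ⟨Sum.elim (fun i : Fin n => if (i:ℕ) < 1 then 2*(n:ℝ) else 2*(n:ℝ)-4)
    (fun j : Fin n => if (j:ℕ) < n-1-1 then 2*(n:ℝ) else 1), ?_⟩
  set x : Fin n ⊕ Fin n → ℝ := Sum.elim (fun i : Fin n => if (i:ℕ) < 1 then 2*(n:ℝ) else 2*(n:ℝ)-4)
    (fun j : Fin n => if (j:ℕ) < n-1-1 then 2*(n:ℝ) else 1) with hxdef
  rw [form_value hn x, dot_value hn x]
  have hA : x (Sum.inl 0) = 2*(n:ℝ) := by
    rw [hxdef]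
    simp
  have hconstL : ∀ i ∈ Finset.univ.erase (0 : Fin n), x (Sum.inl i) = 2*(n:ℝ)-4 := by
    intro i hi
    have hine : i ≠ 0 := (Finset.mem_erase.mp hi).1
    have h0 : ¬ ((i:ℕ) = 0) := fun h => hine (Fin.ext (by simpa using h))
    rw [hxdef]
    simp [Nat.lt_one_iff, h0, hine]
  have hconstL2 : ∀ i ∈ Finset.univ.erase (0 : Fin n), (x (Sum.inl i))^2 = (2*(n:ℝ)-4)^2 :=
    fun i hi => by rw [hconstL i hi]
  have hconstC : ∀ j ∈ Finset.univ.filter (fun j : Fin n => (j:ℕ) < n-1-1),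
      x (Sum.inr j) = 2*(n:ℝ) := by
    intro j hj
    have := (Finset.mem_filter.mp hj).2
    rw [hxdef]
    simp [this]
  have hconstC2 : ∀ j ∈ Finset.univ.filter (fun j : Fin n => (j:ℕ) < n-1-1),
      (x (Sum.inr j))^2 = (2*(n:ℝ))^2 := fun j hj => by rw [hconstC j hj]
  have hconstD : ∀ j ∈ Finset.univ.filter (fun j : Fin n => ¬ (j:ℕ) < n-1-1),
      x (Sum.inr j) = 1 := by
    intro j hj
    have := (Finset.mem_filter.mp hj).2
    rw [hxdef]
    simp [this]
  have hconstD2 : ∀ j ∈ Finset.univ.filter (fun j : Fin n => ¬ (j:ℕ) < n-1-1),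
      (x (Sum.inr j))^2 = 1 := fun j hj => by rw [hconstD j hj]; norm_num
  have hBv : ∑ i ∈ Finset.univ.erase (0 : Fin n), (x (Sum.inl i))^2
      = ((n:ℝ)-1) * (2*(n:ℝ)-4)^2 := by
    rw [Finset.sum_congr rfl hconstL2, Finset.sum_const, nsmul_eq_mul, cardE hn]
  have hPv : ∑ i ∈ Finset.univ.erase (0 : Fin n), x (Sum.inl i)
      = ((n:ℝ)-1) * (2*(n:ℝ)-4) := by
    rw [Finset.sum_congr rfl hconstL, Finset.sum_const, nsmul_eq_mul, cardE hn]
  have hQv : ∑ j ∈ Finset.univ.filter (fun j : Fin n => (j:ℕ) < n-1-1), x (Sum.inr j)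
      = ((n:ℝ)-2) * (2*(n:ℝ)) := by
    rw [Finset.sum_congr rfl hconstC, Finset.sum_const, nsmul_eq_mul, cardC hn]
  have hCv : ∑ j ∈ Finset.univ.filter (fun j : Fin n => (j:ℕ) < n-1-1), (x (Sum.inr j))^2
      = ((n:ℝ)-2) * (2*(n:ℝ))^2 := by
    rw [Finset.sum_congr rfl hconstC2, Finset.sum_const, nsmul_eq_mul, cardC hn]
  have hSv : ∑ j ∈ Finset.univ.filter (fun j : Fin n => ¬ (j:ℕ) < n-1-1), x (Sum.inr j)
      = 2 := by
    rw [Finset.sum_congr rfl hconstD, Finset.sum_const, nsmul_eq_mul, cardD hn]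
    norm_num
  have hDv : ∑ j ∈ Finset.univ.filter (fun j : Fin n => ¬ (j:ℕ) < n-1-1), (x (Sum.inr j))^2
      = 2 := by
    rw [Finset.sum_congr rfl hconstD2, Finset.sum_const, nsmul_eq_mul, cardD hn]
    norm_num
  rw [hA, hBv, hPv, hQv, hCv, hSv, hDv]
  nlinarith [hN]
end Bounds

end QSpecAux

/-- For `n ≥ 3`, `2n - 2 < q(Q_n^1) < 2n - 1`. -/
theorem stmt_10 (n : ℕ) (hn : 3 ≤ n) :
    2 * (n : ℝ) - 2 < qSpec (Qgraph n 1) ∧ qSpec (Qgraph n 1) < 2 * (n : ℝ) - 1 := by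
  haveI : NeZero n := ⟨by omega⟩
  haveI : Nonempty (Fin n ⊕ Fin n) := ⟨Sum.inl ⟨0, by omega⟩⟩
  exact QSpecAux.qSpec_bounds (Qgraph n 1)
    (fun x hx => QSpecAux.form_upper hn x hx) (QSpecAux.form_lower hn)
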